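/- Let V be a free graded k-module with homogeneous basis β and let v_1…v_n be a word in β_n with cyclic period k (the smallest positive integer with τ^k*(v_1…v_n) = v_1…v_n as words). If the signed cyclic action satisfies τ^k·[v_1|…|v_n] = −[v_1|…|v_n] in V^{⊗n}, then the cyclic invariant submodule of V^{⊗n} spanned by the orbit of [v_1|…|v_n] is isomorphic to the 2-torsion submodule _2k = {x ∈ k : 2x = 0}, generated by sym(v_1…v_n) = Σ_{i=0}^{k−1} τ^i·[v_1|…|v_n]; and the corresponding summand of the coinvariants is isomorphic to k/2k. -/

import Mathlib

/-!
STATEMENT 13.  Let `V` be a free graded `k`-module with homogeneous basis `B`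
(with degrees `deg : B → ℤ`), and let `w = v₁…vₙ` be a word in the basis of
length `n ≥ 1` with cyclic period `p` (the smallest positive integer with
`τᵖ * w = w` as words).  If the signed cyclic operator satisfies
`τᵖ·[w] = -[w]` in `V^{⊗n}`, then the invariant part of the orbit span of
`[w]` is isomorphic to the 2-torsion `₂k` of `k` via `c ↦ c·sym(w)` where
`sym(w) = ∑_{i<p} τ^i·[w]`, and the corresponding orbit summand of the
coinvariants is isomorphic to `k/2k`.
-/

def sgn (m : ℤ) : ℤ := if Even m then 1 else -1

def degW {B : Type*} (deg : B → ℤ) (l : List B) : ℤ := (l.map deg).sum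

/-- The signed cyclic operator `τ·[v₁|…|vₙ] = (-1)^{|vₙ||v₁…v_{n-1}|}[vₙ|v₁|…|v_{n-1}]`. -/
noncomputable def cyclicTau {k B : Type*} [CommRing k] (deg : B → ℤ) :
    (List B →₀ k) →ₗ[k] (List B →₀ k) :=
  Finsupp.lift _ k _ fun l =>
    match l with
    | [] => Finsupp.single [] 1
    | b :: t =>
      sgn (deg ((b :: t).getLast (by simp)) * degW deg (b :: t).dropLast) •
        Finsupp.single ((b :: t).getLast (by simp) :: (b :: t).dropLast) 1

/-- The unsigned cyclic rotation on words. -/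
def rotW {B : Type*} : List B → List B
  | [] => []
  | b :: t => (b :: t).getLast (by simp) :: (b :: t).dropLast

def rotInv {B : Type*} : List B → List B
  | [] => []
  | b :: t => t ++ [b]

def eps {B : Type*} (deg : B → ℤ) : List B → ℤ
  | [] => 1
  | b :: t => sgn (deg ((b :: t).getLast (by simp)) * degW deg (b :: t).dropLast)

lemma sgn_mul_self (m : ℤ) : sgn m * sgn m = 1 := by unfold sgn; split <;> norm_num

lemma eps_mul_self {B : Type*} (deg : B → ℤ) (l : List B) :
    eps deg l * eps deg l = 1 := by
  cases l with
  | nil => rfl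
  | cons b t => exact sgn_mul_self _

lemma rotInv_rotW {B : Type*} (l : List B) : rotInv (rotW l) = l := by
  cases l with
  | nil => rfl
  | cons b t =>
    show (b :: t).dropLast ++ [(b :: t).getLast (by simp)] = b :: t
    exact List.dropLast_append_getLast (by simp)

lemma rotW_append_singleton {B : Type*} (t : List B) (b : B) :
    rotW (t ++ [b]) = b :: t := by
  cases t with
  | nil => rfl
  | cons c u =>
    show ((c :: u) ++ [b]).getLast (by simp) :: ((c :: u) ++ [b]).dropLast = b :: c :: u
    rw [List.dropLast_concat]
    simp [List.getLast_append]

lemma rotW_rotInv {B : Type*} (l : List B) : rotW (rotInv l) = l := by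
  cases l with
  | nil => rfl
  | cons b t => exact rotW_append_singleton t b

lemma tau_single {k B : Type*} [CommRing k] (deg : B → ℤ) (l : List B) :
    cyclicTau (k := k) deg (Finsupp.single l 1) =
      ((eps deg l : ℤ) : k) • Finsupp.single (rotW l) 1 := by
  cases l with
  | nil =>
    simp [cyclicTau, Finsupp.lift_apply, Finsupp.sum_single_index, eps, rotW]
  | cons b t =>
    simp only [cyclicTau, Finsupp.lift_apply]
    rw [Finsupp.sum_single_index (by simp), one_smul]
    show _ = ((eps deg (b :: t) : ℤ) : k) • Finsupp.single ((b :: t).getLast (by simp) :: (b :: t).dropLast) 1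
    rw [Int.cast_smul_eq_zsmul]
    rfl

lemma tau_single_c {k B : Type*} [CommRing k] (deg : B → ℤ) (l : List B) (c : k) :
    cyclicTau (k := k) deg (Finsupp.single l c) =
      (((eps deg l : ℤ) : k) * c) • Finsupp.single (rotW l) 1 := by
  have : Finsupp.single l c = c • Finsupp.single l (1 : k) := by
    rw [Finsupp.smul_single, smul_eq_mul, mul_one]
  rw [this, map_smul, tau_single, smul_smul, mul_comm]

lemma tau_apply {k B : Type*} [CommRing k] (deg : B → ℤ) (x : List B →₀ k) (m : List B) :
    cyclicTau (k := k) deg x m = ((eps deg (rotInv m) : ℤ) : k) * x (rotInv m) := by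
  induction x using Finsupp.induction_linear with
  | zero => simp
  | add f g hf hg => rw [map_add, Finsupp.add_apply, hf, hg, Finsupp.add_apply, mul_add]
  | single a b =>
    classical
    rw [tau_single_c]
    rw [Finsupp.smul_apply, Finsupp.single_apply, Finsupp.single_apply]
    by_cases h : rotW a = m
    · have ha : a = rotInv m := by rw [← h, rotInv_rotW]
      rw [← ha]
      simp [h, mul_comm]
    · have ha : ¬ a = rotInv m := fun he => h (by rw [he, rotW_rotInv])
      simp [h, ha]

theorem orbit_torsion_summands (k B : Type*) [CommRing k] (deg : B → ℤ)
    (w : List B) (hw : w ≠ []) (p : ℕ) (hp : 0 < p)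
    -- `p` is the cyclic period of the word `w`
    (hper : rotW^[p] w = w) (hmin : ∀ j, 0 < j → j < p → rotW^[j] w ≠ w)
    -- the signed cyclic action returns `-[w]` after `p` steps
    (hsgn : (cyclicTau (k := k) deg ^ p) (Finsupp.single w 1) = -Finsupp.single w 1) :
    -- (a) the invariants of the orbit span are the 2-torsion of `k`,
    --     generated by `sym(w) = ∑_{i<p} τ^i·[w]`:
    (∀ x : List B →₀ k,
      (x ∈ Submodule.span k {y | ∃ i : ℕ, y = Finsupp.single (rotW^[i] w) (1 : k)} ∧
        cyclicTau (k := k) deg x = x)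
      ↔ ∃! c : k, 2 * c = 0 ∧
          x = c • ∑ i ∈ Finset.range p, (cyclicTau (k := k) deg ^ i) (Finsupp.single w 1)) ∧
    -- (b) the corresponding orbit summand of the coinvariants is `k/2k`:
    ∃ ψ : (Submodule.span k
        {y | ∃ i : ℕ, y = Finsupp.single (rotW^[i] w) (1 : k)}) →ₗ[k]
          (k ⧸ Ideal.span {(2 : k)}),
      Function.Surjective ψ ∧
      LinearMap.ker ψ
        = (LinearMap.range (LinearMap.id - cyclicTau (k := k) deg)).comap
            (Submodule.span k
              {y | ∃ i : ℕ, y = Finsupp.single (rotW^[i] w) (1 : k)}).subtype := by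
  classical
  set τ := cyclicTau (k := k) deg with hτdef
  set M := Submodule.span k {y | ∃ i : ℕ, y = Finsupp.single (rotW^[i] w) (1 : k)} with hMdef
  set words : ℕ → List B := fun i => rotW^[i] w with hwordsdef
  set e : ℕ → (List B →₀ k) := fun i => Finsupp.single (words i) 1 with hedef
  set ε : ℕ → ℤ := fun i => eps deg (words i) with hεdef
  set S : ℕ → ℤ := fun i => ∏ j ∈ Finset.range i, ε j with hSdef
  set T : Set (List B) := {a | ∃ i : ℕ, a = rotW^[i] w} with hTdef
  have hwords0 : words 0 = w := rfl
  have hwordsp : words p = w := hper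
  have hrot : ∀ i, words (i + 1) = rotW (words i) := fun i =>
    Function.iterate_succ_apply' rotW i w
  have hLI : Function.LeftInverse (rotInv (B := B)) rotW := rotInv_rotW
  have hmul : ∀ q, rotW^[p * q] w = w := by
    intro q
    rw [Function.iterate_mul]
    exact Function.iterate_fixed hper q
  have hmod : ∀ i, words i = words (i % p) := by
    intro i
    show rotW^[i] w = rotW^[i % p] w
    conv_lhs => rw [show i = i % p + p * (i / p) from (Nat.mod_add_div i p).symm]
    rw [Function.iterate_add_apply, hmul]
  have hdistlt : ∀ i j, i < j → j < p → words i ≠ words j := by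
    intro i j hij hjp he'
    have h1 : rotW^[i] (rotW^[j - i] w) = rotW^[i] w := by
      rw [← Function.iterate_add_apply, show i + (j - i) = j from by omega]
      exact he'.symm
    have h2 : rotW^[j - i] w = w := by
      have := congrArg (rotInv (B := B))^[i] h1
      rwa [hLI.iterate i _, hLI.iterate i _] at this
    exact hmin (j - i) (by omega) (by omega) h2
  have hdist : ∀ i j, i < p → j < p → words i = words j → i = j := by
    intro i j hi hj he'
    rcases lt_trichotomy i j with h | h | h
    · exact absurd he' (hdistlt i j h hj)
    · exact h
    · exact absurd he'.symm (hdistlt j i h hi)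
  have hmemT : ∀ m, m ∈ T ↔ ∃ i, i < p ∧ m = words i := by
    intro m
    constructor
    · rintro ⟨i, rfl⟩
      exact ⟨i % p, Nat.mod_lt i hp, hmod i⟩
    · rintro ⟨i, _, rfl⟩
      exact ⟨i, rfl⟩
  have hM : M = Finsupp.supported k k T := by
    rw [hMdef, Finsupp.supported_eq_span_single]
    congr 1
    ext y
    constructor
    · rintro ⟨i, rfl⟩
      exact ⟨rotW^[i] w, ⟨i, rfl⟩, rfl⟩
    · rintro ⟨a, ⟨i, rfl⟩, rfl⟩
      exact ⟨i, rfl⟩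
  have hτe : ∀ i, τ (e i) = ((ε i : ℤ) : k) • e (i + 1) := by
    intro i
    rw [hedef]
    show τ (Finsupp.single (words i) 1) = _
    rw [hτdef, tau_single, ← hrot i]
  have hτpow : ∀ i, (τ ^ i) (Finsupp.single w 1) = ((S i : ℤ) : k) • e i := by
    intro i
    induction i with
    | zero => simp [hSdef, hedef, hwords0]
    | succ n ih =>
      rw [pow_succ', Module.End.mul_apply, ih, map_smul, hτe, smul_smul, hSdef]
      show _ = ((↑(∏ j ∈ Finset.range (n + 1), ε j) : k)) • e (n + 1)
      rw [Finset.prod_range_succ]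
      push_cast
      ring_nf
  have hSp : ((S p : ℤ) : k) = -1 := by
    have h1 := hτpow p
    rw [hsgn] at h1
    have h2 := congrArg (fun f : List B →₀ k => f w) h1
    simp only [Finsupp.smul_apply, Finsupp.neg_apply, hedef, hwordsp,
      Finsupp.single_eq_same, smul_eq_mul, mul_one] at h2
    exact h2.symm
  have hS2 : ∀ i, S i * S i = 1 := by
    intro i
    rw [hSdef]
    show (∏ j ∈ Finset.range i, ε j) * (∏ j ∈ Finset.range i, ε j) = 1
    rw [← Finset.prod_mul_distrib]
    exact Finset.prod_eq_one fun j _ => eps_mul_self deg (words j)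
  have hSsucc : ∀ i, S (i + 1) = S i * ε i := fun i => Finset.prod_range_succ ε i
  have hεS : ∀ i, ε i = S i * S (i + 1) := by
    intro i
    rw [hSsucc, ← mul_assoc, hS2, one_mul]
  have hS0 : ((S 0 : ℤ) : k) = 1 := by simp [hSdef]
  have hεlastk : ((ε (p - 1) : ℤ) : k) = -((S (p - 1) : ℤ) : k) := by
    have h := hεS (p - 1)
    rw [show p - 1 + 1 = p from by omega] at h
    have h2 : ((ε (p - 1) : ℤ) : k) = ((S (p - 1) : ℤ) : k) * ((S p : ℤ) : k) := by
      exact_mod_cast congrArg (fun m : ℤ => (m : k)) h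
    rw [h2, hSp, mul_neg_one]
  have hep : e p = e 0 := by rw [hedef]; simp only [hwordsp, hwords0]
  have hdecomp : ∀ x : List B →₀ k, x ∈ Finsupp.supported k k T →
      x = ∑ i ∈ Finset.range p, x (words i) • e i := by
    intro x hx
    ext m
    rw [Finsupp.finset_sum_apply]
    simp only [Finsupp.smul_apply, hedef, Finsupp.single_apply, smul_eq_mul]
    by_cases hm : ∃ i, i < p ∧ m = words i
    · obtain ⟨i0, hi0, rfl⟩ := hm
      rw [Finset.sum_eq_single i0]
      · simp
      · intro i hi hne
        rw [if_neg, mul_zero]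
        exact fun he' => hne (hdist i i0 (Finset.mem_range.mp hi) hi0 he')
      · intro h
        exact absurd (Finset.mem_range.mpr hi0) h
    · have hms : m ∉ T := fun h => hm ((hmemT m).mp h)
      have hx0 : x m = 0 := by
        by_contra h0
        exact hms (hx (Finsupp.mem_support_iff.mpr h0))
      rw [hx0]
      refine (Finset.sum_eq_zero ?_).symm
      intro i hi
      rw [if_neg, mul_zero]
      exact fun he' => hm ⟨i, Finset.mem_range.mp hi, he'.symm⟩
  set sym := ∑ i ∈ Finset.range p, (τ ^ i) (Finsupp.single w (1 : k)) with hsymdef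
  have hsymeq : sym = ∑ i ∈ Finset.range p, ((S i : ℤ) : k) • e i :=
    Finset.sum_congr rfl fun i _ => hτpow i
  have hsymw : sym w = 1 := by
    rw [hsymeq, Finsupp.finset_sum_apply]
    rw [Finset.sum_eq_single 0]
    · simp [hedef, hwords0, hS0]
    · intro i hi hne
      simp only [Finsupp.smul_apply, hedef, Finsupp.single_apply, smul_eq_mul]
      rw [if_neg, mul_zero]
      intro he'
      rw [← hwords0] at he'
      exact hne (hdist i 0 (Finset.mem_range.mp hi) hp he')
    · intro h
      exact absurd (Finset.mem_range.mpr hp) h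
  have hτsym : τ sym = sym - (2 : k) • Finsupp.single w (1 : k) := by
    have h1 : τ sym = ∑ i ∈ Finset.range p, (τ ^ (i + 1)) (Finsupp.single w (1 : k)) := by
      rw [hsymdef, map_sum]
      refine Finset.sum_congr rfl fun i _ => ?_
      rw [pow_succ', Module.End.mul_apply]
    have h2 : ∑ i ∈ Finset.range (p + 1), (τ ^ i) (Finsupp.single w (1 : k))
        = ∑ i ∈ Finset.range p, (τ ^ (i + 1)) (Finsupp.single w (1 : k))
          + (τ ^ 0) (Finsupp.single w (1 : k)) := Finset.sum_range_succ' _ p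
    have h3 : ∑ i ∈ Finset.range (p + 1), (τ ^ i) (Finsupp.single w (1 : k))
        = sym + (τ ^ p) (Finsupp.single w (1 : k)) := by
      rw [Finset.sum_range_succ, hsymdef]
    rw [h1, eq_sub_iff_add_eq]
    have h4 : ∑ i ∈ Finset.range p, (τ ^ (i + 1)) (Finsupp.single w (1 : k))
        = sym + (τ ^ p) (Finsupp.single w (1 : k)) - (τ ^ 0) (Finsupp.single w (1 : k)) := by
      rw [← h3, h2]; abel
    rw [h4, hsgn, pow_zero, Module.End.one_apply, two_smul]
    abel
  have hsymM : sym ∈ M := by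
    rw [hsymeq, hMdef]
    refine Submodule.sum_mem _ fun i _ => Submodule.smul_mem _ _ ?_
    exact Submodule.subset_span ⟨i, rfl⟩
  constructor
  · -- part (a)
    intro x
    constructor
    · rintro ⟨hxM, hxinv⟩
      have hxsupp : x ∈ Finsupp.supported k k T := hM ▸ hxM
      have hstep : ∀ i, x (words (i + 1)) = ((ε i : ℤ) : k) * x (words i) := by
        intro i
        have h1 := tau_apply deg x (words (i + 1))
        rw [show cyclicTau (k := k) deg = τ from rfl, hxinv] at h1
        have h2 : rotInv (words (i + 1)) = words i := by rw [hrot, rotInv_rotW]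
        rw [h2] at h1
        exact h1
      have haS : ∀ i, x (words i) = ((S i : ℤ) : k) * x (words 0) := by
        intro i
        induction i with
        | zero => rw [hS0, one_mul]
        | succ n ih =>
          rw [hstep, ih, hSsucc]
          push_cast
          ring
      have h2a : 2 * x (words 0) = 0 := by
        have h1 : x (words p) = x (words 0) := by rw [hwordsp, hwords0]
        rw [haS p, hSp] at h1
        linear_combination -h1
      have hxc : x = x (words 0) • sym := by
        rw [hsymeq, Finset.smul_sum]
        calc x = ∑ i ∈ Finset.range p, x (words i) • e i := hdecomp x hxsupp
          _ = ∑ i ∈ Finset.range p, x (words 0) • ((S i : ℤ) : k) • e i := by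
              refine Finset.sum_congr rfl fun i _ => ?_
              rw [haS i, smul_smul, mul_comm]

      refine ⟨x (words 0), ⟨h2a, hxc⟩, ?_⟩
      intro c' ⟨_, hc2⟩
      have h1 := congrArg (fun f : List B →₀ k => f w) hc2
      simp only [Finsupp.smul_apply, smul_eq_mul] at h1
      rw [hsymw, mul_one] at h1
      rw [← h1, hwords0]
    · rintro ⟨c, ⟨hc2, hcx⟩, -⟩
      constructor
      · rw [hcx]
        exact M.smul_mem _ hsymM
      · rw [hcx, map_smul]
        rw [hτsym, smul_sub, smul_smul, mul_comm, hc2, zero_smul, sub_zero]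
  · -- part (b)
    set φ : (List B →₀ k) →ₗ[k] k :=
      ∑ i ∈ Finset.range p, ((S i : ℤ) : k) • Finsupp.lapply (words i) with hφdef
    have hφapply : ∀ y : List B →₀ k,
        φ y = ∑ i ∈ Finset.range p, ((S i : ℤ) : k) * y (words i) := by
      intro y
      rw [hφdef, LinearMap.sum_apply]
      exact Finset.sum_congr rfl fun i _ => rfl
    have hφe : ∀ j, j < p → φ (e j) = ((S j : ℤ) : k) := by
      intro j hj
      rw [hφapply, Finset.sum_eq_single j]
      · simp [hedef]
      · intro i hi hne
        have : e j (words i) = 0 := by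
          rw [hedef]
          show (Finsupp.single (words j) (1:k)) (words i) = 0
          rw [Finsupp.single_apply, if_neg, ]
          exact fun he' => hne (hdist i j (Finset.mem_range.mp hi) hj he'.symm)
        rw [this, mul_zero]
      · intro h
        exact absurd (Finset.mem_range.mpr hj) h
    have hφτ : ∀ y : List B →₀ k,
        φ (τ y) = φ y - (2 * ((S (p - 1) : ℤ) : k)) * y (words (p - 1)) := by
      obtain ⟨n, rfl⟩ : ∃ n, p = n + 1 := ⟨p - 1, by omega⟩
      intro y
      simp only [Nat.add_sub_cancel]
      rw [hφapply, hφapply,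
        Finset.sum_range_succ' (fun i => ((S i : ℤ) : k) * (τ y) (words i)) n,
        Finset.sum_range_succ (fun i => ((S i : ℤ) : k) * y (words i)) n]
      have hterm : ∀ i, ((S (i+1) : ℤ) : k) * (τ y) (words (i + 1)) = ((S i : ℤ) : k) * y (words i) := by
        intro i
        rw [show τ y = cyclicTau (k := k) deg y from rfl, tau_apply]
        have h2 : rotInv (words (i + 1)) = words i := by rw [hrot, rotInv_rotW]
        rw [h2]
        have h3 : ((S (i+1) : ℤ) : k) * (((ε i : ℤ) : k)) = ((S i : ℤ) : k) := by
          have : S (i+1) * ε i = S i := by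
            rw [hSsucc, mul_assoc, eps_mul_self, mul_one]
          exact_mod_cast congrArg (fun m : ℤ => (m : k)) this
        rw [← mul_assoc, h3]
      have h0 : ((S 0 : ℤ) : k) * (τ y) (words 0) = -(((S n : ℤ) : k)) * y (words n) := by
        rw [show τ y = cyclicTau (k := k) deg y from rfl, tau_apply]
        have h4 : rotInv (words 0) = words n := by
          rw [hwords0, ← hwordsp, hrot, rotInv_rotW]
        have h5 : ((ε n : ℤ) : k) = -((S n : ℤ) : k) := by
          simpa only [Nat.add_sub_cancel] using hεlastk
        rw [h4, hS0, one_mul]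
        show ((ε n : ℤ) : k) * y (words n) = _
        rw [h5]
      rw [Finset.sum_congr rfl fun i _ => hterm i, h0]
      ring
    refine ⟨(Ideal.span {(2 : k)}).mkQ.comp (φ.comp M.subtype), ?_, ?_⟩
    · intro q
      obtain ⟨c, rfl⟩ := Submodule.mkQ_surjective _ q
      refine ⟨⟨c • e 0, M.smul_mem c (hMdef ▸ Submodule.subset_span ⟨0, rfl⟩)⟩, ?_⟩
      rw [LinearMap.comp_apply, LinearMap.comp_apply]
      show Submodule.mkQ _ (φ (c • e 0)) = _
      rw [map_smul, hφe 0 hp, hS0, smul_eq_mul, mul_one]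
    · -- kernel
      set z : ℕ → (List B →₀ k) :=
        fun i => ∑ j ∈ Finset.Ico i p, ((S i * S j : ℤ) : k) • e j with hzdef
      have hzrec : ∀ i, i + 1 < p →
          z i = e i + ((S i * S (i+1) : ℤ) : k) • z (i + 1) := by
        intro i hi
        rw [hzdef]
        show ∑ j ∈ Finset.Ico i p, ((S i * S j : ℤ) : k) • e j
            = e i + ((S i * S (i+1) : ℤ) : k) • ∑ j ∈ Finset.Ico (i+1) p, ((S (i+1) * S j : ℤ) : k) • e j
        rw [Finset.sum_eq_sum_Ico_succ_bot (by omega : i < p), Finset.smul_sum]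
        congr 1
        · have : ((S i * S i : ℤ) : k) = 1 := by exact_mod_cast congrArg (fun m : ℤ => (m : k)) (hS2 i)
          rw [this, one_smul]
        · refine Finset.sum_congr rfl fun j _ => ?_
          rw [smul_smul]
          congr 1
          have : S i * S (i+1) * (S (i+1) * S j) = S i * S j := by
            linear_combination (S i * S j) * hS2 (i+1)
          exact_mod_cast (congrArg (fun m : ℤ => (m : k)) this).symm
      have hτz : ∀ d i, i + (d + 1) = p →
          ((LinearMap.id - τ : (List B →₀ k) →ₗ[k] (List B →₀ k))) (z i)
            = e i + ((S i : ℤ) : k) • e 0 := by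
        intro d
        induction d with
        | zero =>
          intro i hi
          have hz1 : z i = e i := by
            rw [hzdef]
            show ∑ j ∈ Finset.Ico i p, ((S i * S j : ℤ) : k) • e j = e i
            rw [← hi]
            rw [Nat.Ico_succ_singleton]
            rw [Finset.sum_singleton]
            have : ((S i * S i : ℤ) : k) = 1 := by exact_mod_cast congrArg (fun m : ℤ => (m : k)) (hS2 i)
            rw [this, one_smul]
          rw [hz1, LinearMap.sub_apply, LinearMap.id_apply, hτe, hi, hep]
          have hi' : i = p - 1 := by omega
          rw [hi', hεlastk, neg_smul, sub_neg_eq_add]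
        | succ d ih =>
          intro i hi
          rw [hzrec i (by omega), map_add, map_smul, ih (i+1) (by omega),
            LinearMap.sub_apply, LinearMap.id_apply, hτe]
          have hc1 : ((ε i : ℤ) : k) = ((S i * S (i+1) : ℤ) : k) := by
            exact_mod_cast congrArg (fun m : ℤ => (m : k)) (hεS i)
          have hc2 : ((S i * S (i+1) : ℤ) : k) * ((S (i+1) : ℤ) : k) = ((S i : ℤ) : k) := by
            have : S i * S (i+1) * S (i+1) = S i := by
              rw [mul_assoc, hS2, mul_one]
            exact_mod_cast congrArg (fun m : ℤ => (m : k)) this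
          rw [smul_add, smul_smul, hc1, hc2]
          abel
      apply le_antisymm
      · -- ker ⊆ comap
        intro x hker
        rw [LinearMap.mem_ker, LinearMap.comp_apply, LinearMap.comp_apply] at hker
        have hmem : φ (↑x : List B →₀ k) ∈ Ideal.span {(2 : k)} := by
          rwa [← Submodule.Quotient.mk_eq_zero, ← Submodule.mkQ_apply]
        obtain ⟨c, hc⟩ := Ideal.mem_span_singleton'.mp hmem
        rw [Submodule.mem_comap, LinearMap.mem_range]
        have hxsupp : (↑x : List B →₀ k) ∈ Finsupp.supported k k T := hM ▸ x.2
        have hxd := hdecomp _ hxsupp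
        refine ⟨(∑ i ∈ Finset.range p, (↑x : List B →₀ k) (words i) • z i) - c • z 0, ?_⟩
        rw [Submodule.subtype_apply, map_sub, map_sum, map_smul]
        simp only [map_smul]
        have h1 : ∀ i ∈ Finset.range p,
            (↑x : List B →₀ k) (words i)
                • ((LinearMap.id - τ : (List B →₀ k) →ₗ[k] (List B →₀ k)) (z i))
              = (↑x : List B →₀ k) (words i) • e i
                + ((↑x : List B →₀ k) (words i) * ((S i : ℤ) : k)) • e 0 := by
          intro i hi
          have hip : i < p := Finset.mem_range.mp hi
          rw [hτz (p - i - 1) i (by omega), smul_add, smul_smul]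
        rw [Finset.sum_congr rfl h1]
        rw [Finset.sum_add_distrib, ← Finset.sum_smul, ← hxd]
        rw [hτz (p - 1) 0 (by omega), hS0, one_smul]
        have hφx : ∑ i ∈ Finset.range p, (↑x : List B →₀ k) (words i) * ((S i : ℤ) : k)
            = φ (↑x : List B →₀ k) := by
          rw [hφapply]
          exact Finset.sum_congr rfl fun i _ => mul_comm _ _
        rw [hφx, ← hc]
        rw [show c * 2 = c + c from by ring, add_smul, smul_add]
        abel
      · -- comap ⊆ ker
        rintro x hx
        rw [Submodule.mem_comap, LinearMap.mem_range] at hx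
        obtain ⟨y, hy⟩ := hx
        rw [LinearMap.mem_ker, LinearMap.comp_apply, LinearMap.comp_apply]
        show Submodule.mkQ _ (φ (↑x : List B →₀ k)) = 0
        rw [Submodule.mkQ_apply, Submodule.Quotient.mk_eq_zero]
        rw [show (↑x : List B →₀ k)
            = (LinearMap.id - τ : (List B →₀ k) →ₗ[k] (List B →₀ k)) y from hy.symm]
        rw [LinearMap.sub_apply, LinearMap.id_apply, map_sub, hφτ]
        rw [show φ y - (φ y - 2 * ((S (p-1) : ℤ) : k) * y (words (p-1)))
            = 2 * (((S (p-1) : ℤ) : k) * y (words (p-1))) from by ring]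
        exact Ideal.mul_mem_right _ _ (Ideal.subset_span rfl)
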